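/- Let {R_α : α ∈ S} be a family of commutative rings and R = ∏_{α∈S} R_α the product ring. Then R is a UPW-ring if and only if each R_α is a UPW-ring. -/
import Mathlib


/-- `R` is a UPW-ring: for all `a b` with `aR ⊓ bR = 0`, `Ann(a) + Ann(b)` contains a
unit. -/
def IsUPWRing (R : Type*) [CommRing R] : Prop :=
  ∀ a b : R, Ideal.span {a} ⊓ Ideal.span {b} = ⊥ →
    ∃ x y : R, x * a = 0 ∧ y * b = 0 ∧ IsUnit (x + y)


theorem pi_isUnit_iff {S : Type*} (R : S → Type*) [∀ α, CommRing (R α)]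
    (f : ∀ α, R α) : IsUnit f ↔ ∀ α, IsUnit (f α) := by
  constructor
  · intro hf α
    exact hf.map (Pi.evalRingHom R α)
  · intro hf
    choose g hg using fun α => isUnit_iff_exists_inv.mp (hf α)
    exact isUnit_iff_exists_inv.mpr ⟨g, funext hg⟩

/-- A product of commutative rings is a UPW-ring iff each factor is. -/
theorem stmt3 {S : Type*} (R : S → Type*) [∀ α, CommRing (R α)] :
    IsUPWRing (∀ α, R α) ↔ ∀ α, IsUPWRing (R α) := by
  classical
  constructor
  · intro h α a b hab
    have hspan : Ideal.span {Pi.single α a} ⊓ Ideal.span {Pi.single α b} = ⊥ := by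
      rw [eq_bot_iff]
      intro z hz
      obtain ⟨hz1, hz2⟩ := Ideal.mem_inf.mp hz
      obtain ⟨r, hr⟩ := Ideal.mem_span_singleton'.mp hz1
      obtain ⟨s, hs⟩ := Ideal.mem_span_singleton'.mp hz2
      rw [Ideal.mem_bot]
      funext β
      by_cases hβ : β = α
      · subst hβ
        have h1 : z β ∈ Ideal.span {a} := by
          refine Ideal.mem_span_singleton'.mpr ⟨r β, ?_⟩
          have := congrFun hr β; simpa using this
        have h2 : z β ∈ Ideal.span {b} := by
          refine Ideal.mem_span_singleton'.mpr ⟨s β, ?_⟩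
          have := congrFun hs β; simpa using this
        have : z β ∈ Ideal.span {a} ⊓ Ideal.span {b} := Ideal.mem_inf.mpr ⟨h1, h2⟩
        rw [hab, Ideal.mem_bot] at this
        simpa using this
      · have := congrFun hr β
        simp [Pi.single_eq_of_ne hβ] at this
        simpa using this.symm
    obtain ⟨x, y, hx, hy, hu⟩ := h (Pi.single α a) (Pi.single α b) hspan
    refine ⟨x α, y α, ?_, ?_, ?_⟩
    · have := congrFun hx α; simpa using this
    · have := congrFun hy α; simpa using this
    · have := (pi_isUnit_iff R (x+y)).mp hu α; simpa using this
  · intro h a b hab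
    have hcomp : ∀ α, Ideal.span {a α} ⊓ Ideal.span {b α} = ⊥ := by
      intro α
      rw [eq_bot_iff]
      intro z hz
      obtain ⟨hz1, hz2⟩ := Ideal.mem_inf.mp hz
      obtain ⟨r, hr⟩ := Ideal.mem_span_singleton'.mp hz1
      obtain ⟨s, hs⟩ := Ideal.mem_span_singleton'.mp hz2
      have hw : Pi.single α z ∈ Ideal.span {a} ⊓ Ideal.span {b} := by
        refine Ideal.mem_inf.mpr ⟨?_, ?_⟩
        · refine Ideal.mem_span_singleton'.mpr ⟨Pi.single α r, ?_⟩
          funext β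
          by_cases hβ : β = α
          · subst hβ; simpa using hr
          · simp [Pi.single_eq_of_ne hβ]
        · refine Ideal.mem_span_singleton'.mpr ⟨Pi.single α s, ?_⟩
          funext β
          by_cases hβ : β = α
          · subst hβ; simpa using hs
          · simp [Pi.single_eq_of_ne hβ]
      rw [hab, Ideal.mem_bot] at hw
      have := congrFun hw α
      simpa using this
    choose x y hx hy hu using fun α => h α (a α) (b α) (hcomp α)
    exact ⟨x, y, funext hx, funext hy, (pi_isUnit_iff R (x+y)).mpr hu⟩
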